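/- Let V be a real inner product space, A : V → V a symmetric linear map with ⟪A v, v⟫ ≥ λ₁‖v‖² for all v ∈ V for some λ₁ > 0, f : [0,∞) → V continuous with ‖f(t)‖ ≤ F for all t ≥ 0, and let u : [0,∞) → V be continuously differentiable with u'(t) + (1 + ⟪A u(t), u(t)⟫) · A u(t) = f(t) for all t ≥ 0. Then for every α with 0 < α < λ₁/2, setting β = 1 − 2α/λ₁, for all t ≥ 0: ‖u(t)‖² + min(β, 2) · e^{−2αt} ∫₀ᵗ e^{2αs} (⟪A u(s), u(s)⟫ + ⟪A u(s), u(s)⟫²) ds ≤ e^{−2αt}‖u(0)‖² + (F²/(2αλ₁))(1 − e^{−2αt}). -/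

import Mathlib

open Set Real

/-- Exponentially weighted a priori bound (3.2) for the semidiscrete Kirchhoff equation. -/
theorem semidiscrete_apriori_L2
    {V : Type*} [NormedAddCommGroup V] [InnerProductSpace ℝ V]
    (A : V →ₗ[ℝ] V)
    (hsymm : ∀ v w : V, (inner ℝ (A v) w : ℝ) = inner ℝ v (A w))
    (lambda1 : ℝ) (hlambda1 : 0 < lambda1)
    (hcoercive : ∀ v : V, (inner ℝ (A v) v : ℝ) ≥ lambda1 * ‖v‖ ^ 2)
    (f : ℝ → V) (hf_cont : ContinuousOn f (Ici 0))
    (F : ℝ) (hF : ∀ t ∈ Ici (0 : ℝ), ‖f t‖ ≤ F)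
    (u u' : ℝ → V)
    (hu'_cont : ContinuousOn u' (Ici 0))
    (hu_deriv : ∀ t ∈ Ici (0 : ℝ), HasDerivWithinAt u (u' t) (Ici 0) t)
    (heq : ∀ t ∈ Ici (0 : ℝ), u' t + (1 + (inner ℝ (A (u t)) (u t) : ℝ)) • A (u t) = f t)
    (α : ℝ) (hα : 0 < α) (halam : α < lambda1 / 2) (β : ℝ) (hβ : β = 1 - 2 * α / lambda1) :
    ∀ t ∈ Ici (0 : ℝ),
      ‖u t‖ ^ 2 + min β 2 * exp (-2 * α * t) *
          (∫ s in (0 : ℝ)..t,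
            exp (2 * α * s) * ((inner ℝ (A (u s)) (u s) : ℝ) + (inner ℝ (A (u s)) (u s) : ℝ) ^ 2))
        ≤ exp (-2 * α * t) * ‖u 0‖ ^ 2 + F ^ 2 / (2 * α * lambda1) * (1 - exp (-2 * α * t)) := by
  set a : ℝ → ℝ := fun s => (inner ℝ (A (u s)) (u s) : ℝ) with ha_def
  have hu_cont : ContinuousOn u (Ici 0) := fun s hs => (hu_deriv s hs).continuousWithinAt
  have ha_nonneg : ∀ s : ℝ, 0 ≤ a s := fun s =>
    le_trans (by positivity) (hcoercive (u s))
  have hode' : ∀ s ∈ Ici (0:ℝ), u' s = f s - (1 + a s) • A (u s) := fun s hs =>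
    eq_sub_of_add_eq (heq s hs)
  -- quadratic identity for a
  have hq : ∀ s ∈ Ici (0:ℝ), (inner ℝ (f s - u' s) (u s) : ℝ) = (1 + a s) * a s := by
    intro s hs
    rw [hode' s hs, sub_sub_cancel, real_inner_smul_left]
  -- a is continuous on Ici 0
  have ha_eq : ∀ s ∈ Ici (0:ℝ),
      a s = (Real.sqrt (1 + 4 * (inner ℝ (f s - u' s) (u s) : ℝ)) - 1) / 2 := by
    intro s hs
    have hsq : (1:ℝ) + 4 * (inner ℝ (f s - u' s) (u s) : ℝ) = (2 * a s + 1) ^ 2 := by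
      rw [hq s hs]; ring
    rw [hsq, Real.sqrt_sq (by linarith [ha_nonneg s])]
    ring
  have ha_cont : ContinuousOn a (Ici 0) := by
    have hcomb : ContinuousOn
        (fun s => (Real.sqrt (1 + 4 * (inner ℝ (f s - u' s) (u s) : ℝ)) - 1) / 2) (Ici 0) := by
      apply ContinuousOn.div_const
      apply ContinuousOn.sub _ continuousOn_const
      apply Real.continuous_sqrt.comp_continuousOn
      exact continuousOn_const.add
        (continuousOn_const.mul ((hf_cont.sub hu'_cont).inner hu_cont))
    exact hcomb.congr ha_eq
  -- the weighted integrand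
  set g : ℝ → ℝ := fun s => Real.exp (2 * α * s) * (a s + a s ^ 2) with hg_def
  have hg_cont : ContinuousOn g (Ici 0) :=
    (Real.continuous_exp.comp (continuous_const.mul continuous_id)).continuousOn.mul
      (ha_cont.add (ha_cont.pow 2))
  have hg_int : ∀ t ∈ Ici (0:ℝ), IntervalIntegrable g MeasureTheory.volume 0 t := by
    intro t ht
    apply ContinuousOn.intervalIntegrable
    apply hg_cont.mono
    rw [uIcc_of_le ht]
    exact Icc_subset_Ici_self
  set G : ℝ → ℝ := fun t => ∫ s in (0:ℝ)..t, g s with hG_def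
  have hG_deriv : ∀ t ∈ Ici (0:ℝ), HasDerivWithinAt G (g t) (Ici 0) t := by
    intro t ht
    rcases eq_or_lt_of_le (Set.mem_Ici.mp ht) with rfl | htpos
    · exact intervalIntegral.integral_hasDerivWithinAt_right (hg_int 0 self_mem_Ici)
        ((hg_cont.stronglyMeasurableAtFilter_nhdsWithin measurableSet_Ici 0).filter_mono
          (nhdsWithin_mono _ Ioi_subset_Ici_self))
        ((hg_cont 0 self_mem_Ici).mono Ioi_subset_Ici_self)
    · have hmeas : StronglyMeasurableAtFilter g (nhds t) MeasureTheory.volume :=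
        ContinuousOn.stronglyMeasurableAtFilter isOpen_Ioi
        (hg_cont.mono Ioi_subset_Ici_self) t htpos
      have hca : ContinuousAt g t := hg_cont.continuousAt (Ici_mem_nhds htpos)
      exact (intervalIntegral.integral_hasDerivAt_right (hg_int t ht)
        hmeas hca).hasDerivWithinAt
  set c : ℝ := F ^ 2 / (2 * α * lambda1) with hc_def
  set E : ℝ → ℝ := fun s => (inner ℝ (u s) (u s) : ℝ) with hE_def
  set ψ : ℝ → ℝ := fun s => Real.exp (2 * α * s) * E s + β * G s - c * Real.exp (2 * α * s)
    with hψ_def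
  set D : ℝ → ℝ := fun t => (2 * α * Real.exp (2 * α * t) * E t
      + Real.exp (2 * α * t) * (2 * (inner ℝ (u' t) (u t) : ℝ)))
      + β * g t - c * (2 * α * Real.exp (2 * α * t)) with hD_def
  have hexp : ∀ t : ℝ, HasDerivAt (fun s => Real.exp (2 * α * s))
      (2 * α * Real.exp (2 * α * t)) t := by
    intro t
    have h1 : HasDerivAt (fun s : ℝ => 2 * α * s) (2 * α) t := by
      simpa using (hasDerivAt_id t).const_mul (2 * α)
    simpa [mul_comm] using h1.exp
  have hE_deriv : ∀ t ∈ Ici (0:ℝ),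
      HasDerivWithinAt E (2 * (inner ℝ (u' t) (u t) : ℝ)) (Ici 0) t := by
    intro t ht
    have := HasDerivWithinAt.inner ℝ (hu_deriv t ht) (hu_deriv t ht)
    simpa [E, real_inner_comm, two_mul] using this
  have hψ_deriv : ∀ t ∈ Ici (0:ℝ), HasDerivWithinAt ψ (D t) (Ici 0) t := by
    intro t ht
    exact ((((hexp t).hasDerivWithinAt.mul (hE_deriv t ht)).add
      ((hG_deriv t ht).const_mul β)).sub (((hexp t).hasDerivWithinAt).const_mul c)).congr_deriv
      (by rw [hD_def])
  -- pointwise sign of the derivative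
  have hD_nonpos : ∀ t ∈ Ici (0:ℝ), D t ≤ 0 := by
    intro t ht
    have hfu : (inner ℝ (u' t) (u t) : ℝ) = (inner ℝ (f t) (u t) : ℝ) - (1 + a t) * a t := by
      rw [hode' t ht, inner_sub_left, real_inner_smul_left]
    have hp : (inner ℝ (f t) (u t) : ℝ) ≤ ‖f t‖ * ‖u t‖ := real_inner_le_norm _ _
    have hfF : ‖f t‖ ≤ F := hF t ht
    have hco : lambda1 * ‖u t‖ ^ 2 ≤ a t := hcoercive (u t)
    have hEt : E t = ‖u t‖ ^ 2 := real_inner_self_eq_norm_sq (u t)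
    have hcl : c * (2 * α * lambda1) = F ^ 2 := by
      rw [hc_def]; field_simp
    have hbl : β * lambda1 = lambda1 - 2 * α := by
      rw [hβ]; field_simp
    have hexp_pos : (0:ℝ) < Real.exp (2 * α * t) := Real.exp_pos _
    have hbr : lambda1 * (2 * α * E t + 2 * (inner ℝ (u' t) (u t) : ℝ)
        + β * (a t + a t ^ 2) - c * (2 * α)) ≤ 0 := by
      rw [hfu, hEt]
      nlinarith [sq_nonneg (lambda1 * ‖u t‖ - ‖f t‖), ha_nonneg t, sq_nonneg (a t),
        norm_nonneg (f t), norm_nonneg (u t), mul_nonneg (norm_nonneg (f t)) (norm_nonneg (u t)),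
        sq_nonneg F, mul_pos hα hlambda1, sq_nonneg (‖f t‖)]
    have hbr' : 2 * α * E t + 2 * (inner ℝ (u' t) (u t) : ℝ)
        + β * (a t + a t ^ 2) - c * (2 * α) ≤ 0 := by
      nlinarith [hbr, hlambda1]
    have : D t = Real.exp (2 * α * t) * (2 * α * E t + 2 * (inner ℝ (u' t) (u t) : ℝ)
        + β * (a t + a t ^ 2) - c * (2 * α)) := by
      rw [hD_def, hg_def]; ring
    rw [this]
    exact mul_nonpos_of_nonneg_of_nonpos hexp_pos.le hbr'
  -- ψ is antitone on Ici 0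
  have hψ_anti : AntitoneOn ψ (Ici 0) := by
    apply antitoneOn_of_hasDerivWithinAt_nonpos (convex_Ici 0)
      (fun s hs => (hψ_deriv s hs).continuousWithinAt) (f' := D)
    · intro x hx
      rw [interior_Ici] at hx ⊢
      exact (hψ_deriv x (mem_Ici.mpr (le_of_lt (mem_Ioi.mp hx)))).mono Ioi_subset_Ici_self
    · intro x hx
      rw [interior_Ici] at hx
      exact hD_nonpos x (mem_Ici.mpr (le_of_lt (mem_Ioi.mp hx)))
  -- conclude
  intro t ht
  have hψle : ψ t ≤ ψ 0 := hψ_anti self_mem_Ici ht ht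
  have hψ0 : ψ 0 = E 0 - c := by
    simp [ψ, G, intervalIntegral.integral_same]
  have hβ2 : min β 2 = β := by
    apply min_eq_left
    have h2 : 0 < 2 * α / lambda1 := by positivity
    rw [hβ]; linarith
  have hXY : Real.exp (-2 * α * t) * Real.exp (2 * α * t) = 1 := by
    rw [← Real.exp_add]; ring_nf; exact Real.exp_zero
  have hY : (0:ℝ) ≤ Real.exp (-2 * α * t) := (Real.exp_pos _).le
  have hmul := mul_le_mul_of_nonneg_left (hψle.trans_eq hψ0) hY
  have hexpand : Real.exp (-2 * α * t) * ψ t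
      = (Real.exp (-2 * α * t) * Real.exp (2 * α * t)) * E t
        + β * (Real.exp (-2 * α * t) * G t)
        - c * (Real.exp (-2 * α * t) * Real.exp (2 * α * t)) := by
    rw [hψ_def]; ring
  rw [hexpand, hXY, one_mul, mul_one] at hmul
  have hEt : ‖u t‖ ^ 2 = E t := (real_inner_self_eq_norm_sq (u t)).symm
  have hE0 : ‖u 0‖ ^ 2 = E 0 := (real_inner_self_eq_norm_sq (u 0)).symm
  rw [hEt, hE0, hβ2]
  have hGt : intervalIntegral g 0 t MeasureTheory.volume = G t := rfl
  rw [hGt]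
  linarith [hmul]
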